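/- Let f_d : ℝ³ × ℝ^d → ℝ be a function, X = [x₁,...,xₙ] points in ℝ³. Consider problem (P1): minimize over Z ∈ ℝ^{3×n}, h ∈ ℝ^d, R ∈ SO(3), t ∈ ℝ³ the sum ∑ᵢ |f_d(zᵢ, h)|² subject to zᵢ = R xᵢ + t for all i; and problem (P2): minimize over Z, h the sum ∑ᵢ |f_d(R̂ xᵢ + t̂, h)|² where (R̂, t̂) is a minimizer of ∑ᵢ ‖R xᵢ + t − zᵢ‖² over SO(3) × ℝ³. Then the optimal values of (P1) and (P2) are equal: p* = f*. -/
import Mathlib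


open Matrix in
/-- SO(3): 3×3 real matrices with Rᵀ R = 1 and det R = 1. -/
def SO3 : Set (Matrix (Fin 3) (Fin 3) ℝ) :=
  {R | R.transpose * R = 1 ∧ R.det = 1}

/-- the optimal values of (P1) and (P2) coincide, p* = f*. -/
theorem stmt0 (n d : ℕ)
    (fd : (Fin 3 → ℝ) → (Fin d → ℝ) → ℝ)   -- f_d(z, h)
    (x : Fin n → Fin 3 → ℝ)
    -- selection of a minimizer of the inner alignment problem, for each Z
    (A : (Fin n → Fin 3 → ℝ) → Matrix (Fin 3) (Fin 3) ℝ × (Fin 3 → ℝ))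
    (hA : ∀ Z : Fin n → Fin 3 → ℝ, (A Z).1 ∈ SO3 ∧
      ∀ R t, R ∈ SO3 →
        (∑ i, ∑ j, (((A Z).1.mulVec (x i) + (A Z).2 - Z i) j) ^ 2) ≤
        (∑ i, ∑ j, ((R.mulVec (x i) + t - Z i) j) ^ 2))
    -- the set of attainable objective values of (P1)
    (S1 : Set ℝ)
    (hS1 : S1 = {v | ∃ (Z : Fin n → Fin 3 → ℝ) (h : Fin d → ℝ)
        (R : Matrix (Fin 3) (Fin 3) ℝ) (t : Fin 3 → ℝ),
        R ∈ SO3 ∧ (∀ i, Z i = R.mulVec (x i) + t) ∧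
        v = ∑ i, (fd (Z i) h) ^ 2})
    -- the set of attainable objective values of (P2)
    (S2 : Set ℝ)
    (hS2 : S2 = {v | ∃ (Z : Fin n → Fin 3 → ℝ) (h : Fin d → ℝ),
        v = ∑ i, (fd ((A Z).1.mulVec (x i) + (A Z).2) h) ^ 2})
    -- minimizers exist for both problems
    (h1 : ∃ v, IsLeast S1 v) (h2 : ∃ v, IsLeast S2 v) :
    sInf S1 = sInf S2 := by
  have hset : S1 = S2 := by
    ext v
    constructor
    · intro hv
      rw [hS1] at hv
      obtain ⟨Z, h, R, t, hR, hZ, hvv⟩ := hv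
      -- alignment with (R, t) achieves 0, so A Z achieves 0
      have hzero : (∑ i, ∑ j, ((R.mulVec (x i) + t - Z i) j) ^ 2) = 0 := by
        apply Finset.sum_eq_zero
        intro i _
        apply Finset.sum_eq_zero
        intro j _
        rw [hZ i]
        simp
      have hle := (hA Z).2 R t hR
      rw [hzero] at hle
      have hge : 0 ≤ ∑ i, ∑ j, (((A Z).1.mulVec (x i) + (A Z).2 - Z i) j) ^ 2 := by
        apply Finset.sum_nonneg
        intro i _
        apply Finset.sum_nonneg
        intro j _
        exact sq_nonneg _
      have heq0 : (∑ i, ∑ j, (((A Z).1.mulVec (x i) + (A Z).2 - Z i) j) ^ 2) = 0 :=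
        le_antisymm hle hge
      have hAZ : ∀ i, (A Z).1.mulVec (x i) + (A Z).2 = Z i := by
        intro i
        funext j
        have hterm : ∀ i ∈ Finset.univ, (∑ j, (((A Z).1.mulVec (x i) + (A Z).2 - Z i) j) ^ 2) = 0 := by
          rw [← Finset.sum_eq_zero_iff_of_nonneg]
          · exact heq0
          · intro i _
            exact Finset.sum_nonneg fun j _ => sq_nonneg _
        have h2 : ∀ j ∈ Finset.univ, (((A Z).1.mulVec (x i) + (A Z).2 - Z i) j) ^ 2 = 0 := by
          rw [← Finset.sum_eq_zero_iff_of_nonneg]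
          · exact hterm i (Finset.mem_univ i)
          · intro j _
            exact sq_nonneg _
        have := h2 j (Finset.mem_univ j)
        have h3 : ((A Z).1.mulVec (x i) + (A Z).2 - Z i) j = 0 := by
          exact pow_eq_zero_iff (by norm_num) |>.mp this
        have : ((A Z).1.mulVec (x i) + (A Z).2) j - Z i j = 0 := h3
        linarith
      rw [hS2]
      refine ⟨Z, h, ?_⟩
      rw [hvv]
      congr 1
      funext i
      rw [hAZ i]
    · intro hv
      rw [hS2] at hv
      obtain ⟨Z, h, hvv⟩ := hv
      rw [hS1]
      exact ⟨fun i => (A Z).1.mulVec (x i) + (A Z).2, h, (A Z).1, (A Z).2,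
        (hA Z).1, fun i => rfl, hvv⟩
  rw [hset]
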